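/- arXiv:2104.13679 — 4 statements merged into one kernel-verified Lean document; each statement's English description precedes it below -/
import Mathlib

section
/- There is a surjective group homomorphism from the n-fruit cactus group J_n onto the symmetric group S_n sending each generator s_{i,j} to the longest permutation θ_{i,j} of the interval [i,j] (i.e., the permutation reversing i, i+1, ..., j and fixing all other points). -/
/-- Relators of the `n`-fruit cactus group, with generators indexed by pairs
`(i, j)` of naturals.  Only pairs with `1 ≤ i < j ≤ n` are genuine generators;
all other generators are killed by a relation. -/
def cactusRels (n : ℕ) : Set (FreeGroup (ℕ × ℕ)) :=
  {r | (∃ i j, 1 ≤ i ∧ i < j ∧ j ≤ n ∧ r = (FreeGroup.of (i, j)) ^ 2) ∨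
       (∃ i j k l, 1 ≤ i ∧ i < j ∧ j ≤ n ∧ 1 ≤ k ∧ k < l ∧ l ≤ n ∧ (j < k ∨ l < i) ∧
          r = FreeGroup.of (i, j) * FreeGroup.of (k, l) *
              (FreeGroup.of (i, j))⁻¹ * (FreeGroup.of (k, l))⁻¹) ∨
       (∃ i j k l, 1 ≤ i ∧ i < j ∧ j ≤ n ∧ i ≤ k ∧ k < l ∧ l ≤ j ∧
          r = FreeGroup.of (i, j) * FreeGroup.of (k, l) *
              (FreeGroup.of (i, j))⁻¹ * (FreeGroup.of (i + j - l, i + j - k))⁻¹) ∨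
       (∃ i j, ¬(1 ≤ i ∧ i < j ∧ j ≤ n) ∧ r = FreeGroup.of (i, j))}

/-- The `n`-fruit cactus group `J_n`. -/
abbrev CactusGroup (n : ℕ) := PresentedGroup (cactusRels n)

/-- The generator `s_{i,j}` of `J_n`. -/
def cactusGen (n : ℕ) (i j : ℕ) : CactusGroup n := PresentedGroup.of (i, j)

/-- The underlying function of the interval-reversing permutation `θ_{i,j}` of
`S_n = Perm (Fin n)`; here `Fin n` is `0`-indexed, representing the point
`x ∈ {1, …, n}` by `x - 1 : Fin n`.  For `1 ≤ i` and `i ≤ x ≤ j ≤ n` (in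
`1`-indexed terms) it sends `x` to `i + j - x`, and fixes all other points. -/
def thetaFun (n i j : ℕ) (x : Fin n) : Fin n :=
  if h : 1 ≤ i ∧ i ≤ x.val + 1 ∧ x.val + 1 ≤ j ∧ j ≤ n then ⟨i + j - x.val - 2, by omega⟩
  else x

theorem thetaFun_involutive (n i j : ℕ) : Function.Involutive (thetaFun n i j) := by
  intro x
  rw [Fin.ext_iff]
  simp only [thetaFun, apply_dite, Fin.val_mk]
  split_ifs <;> omega

/-- The longest permutation `θ_{i,j}` of the interval `[i,j]`, as an element of `S_n`. -/
def theta (n i j : ℕ) : Equiv.Perm (Fin n) :=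
  Function.Involutive.toPerm (thetaFun n i j) (thetaFun_involutive n i j)

lemma theta_apply (n i j : ℕ) (x : Fin n) : theta n i j x = thetaFun n i j x := rfl

lemma theta_sq (n i j : ℕ) : theta n i j * theta n i j = 1 := by
  ext x
  simp [Equiv.Perm.mul_apply, theta_apply, thetaFun_involutive n i j x]

lemma theta_inv (n i j : ℕ) : (theta n i j)⁻¹ = theta n i j :=
  inv_eq_of_mul_eq_one_right (theta_sq n i j)

lemma theta_comm (n i j k l : ℕ) (h : j < k ∨ l < i) :
    theta n i j * theta n k l = theta n k l * theta n i j := by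
  ext x
  simp only [Equiv.Perm.mul_apply, theta_apply, thetaFun, apply_dite (Fin.val), Fin.val_mk]
  split_ifs <;> omega

lemma theta_conj (n i j k l : ℕ) (h1 : 1 ≤ i) (h2 : i ≤ k) (h3 : k < l) (h4 : l ≤ j)
    (h5 : j ≤ n) :
    theta n i j * theta n k l * theta n i j = theta n (i + j - l) (i + j - k) := by
  ext x
  simp only [Equiv.Perm.mul_apply, theta_apply, thetaFun, apply_dite (Fin.val), Fin.val_mk]
  split_ifs <;> omega

lemma theta_swap (m : ℕ) (k : Fin m) :
    theta (m + 1) (k.val + 1) (k.val + 2) = Equiv.swap k.castSucc k.succ := by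
  ext x
  simp only [theta_apply, thetaFun, Equiv.swap_apply_def, apply_dite (Fin.val), apply_ite (Fin.val),
    Fin.val_mk, Fin.coe_castSucc, Fin.val_succ, Fin.ext_iff]
  split_ifs <;> omega

/-- There is a surjective group homomorphism `J_n → S_n` sending each generator
`s_{i,j}` to the interval reversal `θ_{i,j}`. -/
theorem cactus_to_symm_surjective (n : ℕ) :
    ∃ ψ : CactusGroup n →* Equiv.Perm (Fin n),
      Function.Surjective ψ ∧
      ∀ i j : ℕ, 1 ≤ i → i < j → j ≤ n → ψ (cactusGen n i j) = theta n i j := by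
  classical
  set f : ℕ × ℕ → Equiv.Perm (Fin n) := fun p =>
    if 1 ≤ p.1 ∧ p.1 < p.2 ∧ p.2 ≤ n then theta n p.1 p.2 else 1 with hf
  have hfval : ∀ i j : ℕ, 1 ≤ i → i < j → j ≤ n → f (i, j) = theta n i j := by
    intro i j h1 h2 h3
    simp only [hf, if_pos (show 1 ≤ i ∧ i < j ∧ j ≤ n from ⟨h1, h2, h3⟩)]
  have hrel : ∀ r ∈ cactusRels n, FreeGroup.lift f r = 1 := by
    rintro r (⟨i, j, h1, h2, h3, rfl⟩ | ⟨i, j, k, l, h1, h2, h3, h4, h5, h6, hd, rfl⟩ |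
      ⟨i, j, k, l, h1, h2, h3, h4, h5, h6, rfl⟩ | ⟨i, j, hbad, rfl⟩)
    · rw [map_pow, FreeGroup.lift_apply_of, hfval i j h1 h2 h3, sq, theta_sq]
    · simp only [map_mul, map_inv, FreeGroup.lift_apply_of, hfval i j h1 h2 h3, hfval k l h4 h5 h6,
        theta_inv]
      rw [mul_assoc (theta n i j), theta_comm n k l i j (by omega), ← mul_assoc,
        theta_sq n i j, one_mul, theta_sq]
    · have hv : 1 ≤ i + j - l ∧ i + j - l < i + j - k ∧ i + j - k ≤ n := by omega
      simp only [map_mul, map_inv, FreeGroup.lift_apply_of, hfval i j h1 (by omega) h3,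
        hfval k l (by omega) h5 (by omega),
        hfval (i + j - l) (i + j - k) hv.1 hv.2.1 hv.2.2, theta_inv]
      rw [theta_conj n i j k l h1 h4 h5 h6 h3, theta_sq]
    · rw [FreeGroup.lift_apply_of]
      exact if_neg hbad
  refine ⟨PresentedGroup.toGroup hrel, ?_, fun i j h1 h2 h3 => ?_⟩
  · have hgen : ∀ i j : ℕ, 1 ≤ i → i < j → j ≤ n →
        PresentedGroup.toGroup hrel (cactusGen n i j) = theta n i j := by
      intro i j h1 h2 h3
      show PresentedGroup.toGroup hrel (PresentedGroup.of _) = _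
      rw [PresentedGroup.toGroup.of, hfval i j h1 h2 h3]
    revert hgen
    generalize PresentedGroup.toGroup hrel = ψ
    intro hgen
    clear hfval hrel hf
    clear_value f
    clear f
    revert ψ hgen
    rcases n with _ | m
    all_goals intro ψ
    · intro _ σ
      exact ⟨1, Subsingleton.elim _ _⟩
    · intro hgen σ
      have hσ : σ ∈ Submonoid.closure
          (Set.range fun i : Fin m => Equiv.swap i.castSucc i.succ) := by
        rw [Equiv.Perm.mclosure_swap_castSucc_succ]; trivial
      refine Submonoid.closure_induction ?_ ⟨1, map_one _⟩
        (fun x y _ _ ⟨a, ha⟩ ⟨b, hb⟩ => ⟨a * b, by rw [map_mul, ha, hb]⟩) hσ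
      rintro x ⟨k, rfl⟩
      exact ⟨cactusGen (m + 1) (k.val + 1) (k.val + 2), by
        rw [hgen _ _ (by omega) (by omega) (by omega), theta_swap]⟩
  · show PresentedGroup.toGroup hrel (PresentedGroup.of _) = _
    rw [PresentedGroup.toGroup.of, hfval i j h1 h2 h3]
end

section
/- Let G be a group generated by elements t_1, ..., t_{n−1}, and define q_i := t_1 (t_2 t_1) ⋯ (t_i t_{i−1} ⋯ t_1) for 1 ≤ i ≤ n−1. If each q_i is an involution, then t_1 = q_1, t_2 = q_1 q_2 q_1, and t_i = q_{i−1} q_i q_{i−1} q_{i−2} for i > 2; hence q_1, ..., q_{n−1} also generate G. -/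
/-- The descending word `d_i = t_i t_{i-1} ⋯ t_1` (with `d_0 = 1`). -/
def dword {G : Type*} [Group G] (t : ℕ → G) : ℕ → G
  | 0 => 1
  | (i + 1) => t (i + 1) * dword t i

/-- The element `q_i = t_1 (t_2 t_1) ⋯ (t_i t_{i-1} ⋯ t_1)` (with `q_0 = 1`). -/
def qword {G : Type*} [Group G] (t : ℕ → G) : ℕ → G
  | 0 => 1
  | (i + 1) => qword t i * dword t (i + 1)

lemma dword_eq_q {G : Type*} [Group G] (t : ℕ → G) (i : ℕ) :
    dword t (i + 1) = (qword t i)⁻¹ * qword t (i + 1) := by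
  rw [qword]; group

lemma t_eq_q {G : Type*} [Group G] (t : ℕ → G) (i : ℕ) :
    t (i + 2) = (qword t (i+1))⁻¹ * qword t (i + 2) * (qword t (i+1))⁻¹ * qword t i := by
  have h1 : qword t (i + 2) = qword t (i + 1) * (t (i + 2) * dword t (i + 1)) := by
    rw [show i + 2 = (i + 1) + 1 from rfl, qword, dword]
  rw [dword_eq_q] at h1
  rw [h1]; group

/-- If `G` is generated by `t_1, …, t_{n-1}` and each
`q_i = t_1 (t_2 t_1) ⋯ (t_i ⋯ t_1)` is an involution, then `t_1 = q_1`,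
`t_2 = q_1 q_2 q_1`, and `t_i = q_{i-1} q_i q_{i-1} q_{i-2}` for `i > 2`;
hence `q_1, …, q_{n-1}` also generate `G`. -/
theorem t_in_terms_of_q {G : Type*} [Group G] (n : ℕ) (t : ℕ → G)
    (hgen : Subgroup.closure {g : G | ∃ i, 1 ≤ i ∧ i ≤ n - 1 ∧ g = t i} = ⊤)
    (hinv : ∀ i, 1 ≤ i → i ≤ n - 1 → qword t i * qword t i = 1) :
    (1 ≤ n - 1 → t 1 = qword t 1) ∧
    (2 ≤ n - 1 → t 2 = qword t 1 * qword t 2 * qword t 1) ∧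
    (∀ i, 2 < i → i ≤ n - 1 →
      t i = qword t (i - 1) * qword t i * qword t (i - 1) * qword t (i - 2)) ∧
    Subgroup.closure {g : G | ∃ i, 1 ≤ i ∧ i ≤ n - 1 ∧ g = qword t i} = ⊤ := by
  have hq : ∀ i, 1 ≤ i → i ≤ n - 1 → (qword t i)⁻¹ = qword t i := fun i h1 h2 =>
    inv_eq_of_mul_eq_one_right (hinv i h1 h2)
  have h1 : t 1 = qword t 1 := by simp [qword, dword]
  have h2 : 2 ≤ n - 1 → t 2 = qword t 1 * qword t 2 * qword t 1 := by
    intro hn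
    have h := t_eq_q t 0
    simp only [Nat.zero_add] at h
    rw [hq 1 le_rfl (by omega), show qword t 0 = 1 from rfl, mul_one] at h
    exact h
  have h3 : ∀ i, 2 < i → i ≤ n - 1 →
      t i = qword t (i - 1) * qword t i * qword t (i - 1) * qword t (i - 2) := by
    intro i hi hin
    obtain ⟨j, rfl⟩ : ∃ j, i = j + 2 := ⟨i - 2, by omega⟩
    have h := t_eq_q t j
    rw [hq (j + 1) (by omega) (by omega)] at h
    exact h
  refine ⟨fun _ => h1, h2, h3, ?_⟩
  rw [eq_top_iff, ← hgen, Subgroup.closure_le]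
  rintro g ⟨i, hi1, hi2, rfl⟩
  have mem : ∀ j, 1 ≤ j → j ≤ n - 1 →
      qword t j ∈ Subgroup.closure {g : G | ∃ i, 1 ≤ i ∧ i ≤ n - 1 ∧ g = qword t i} :=
    fun j hj1 hj2 => Subgroup.subset_closure ⟨j, hj1, hj2, rfl⟩
  match i, hi1 with
  | 1, _ =>
    rw [h1]; exact mem 1 le_rfl hi2
  | 2, _ =>
    rw [h2 hi2]
    exact mul_mem (mul_mem (mem 1 le_rfl (by omega)) (mem 2 (by omega) hi2))
      (mem 1 le_rfl (by omega))
  | (k + 3), _ =>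
    rw [h3 (k + 3) (by omega) hi2]
    exact mul_mem (mul_mem (mul_mem (mem (k + 2) (by omega) (by omega))
      (mem (k + 3) (by omega) hi2)) (mem (k + 2) (by omega) (by omega)))
      (mem (k + 1) (by omega) (by omega))
end

section
/- Suppose G is a group generated by involutions q_1, …, q_{n−1}, and φ: J_n → G is a map on generators defined by φ(s_{1,k}) = q_{k−1} for 2 ≤ k ≤ n and φ(s_{i,j}) = q_{j−1} q_{j−i} q_{j−1} for 1 < i < j ≤ n. If the elements q_{i,j} := q_{j−1} q_{j−i} q_{j−1} satisfy the cactus relations (q_{i,j}² = 1; q_{i,j} q_{k,l} q_{i,j} = q_{i+j−l, i+j−k} for i ≤ k < l ≤ j; q_{i,j} q_{k,l} = q_{k,l} q_{i,j} for j < k), then φ extends to a surjective group homomorphism J_n → G. -/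
/-- The element `q_{i,j} := q_{j-1} q_{j-i} q_{j-1}`. -/
def qq {G : Type*} [Group G] (q : ℕ → G) (i j : ℕ) : G :=
  q (j - 1) * q (j - i) * q (j - 1)

/-- If `G` is generated by involutions `q_1, …, q_{n-1}` and the elements
`q_{i,j} = q_{j-1} q_{j-i} q_{j-1}` satisfy the cactus relations, then the
assignment `s_{1,k} ↦ q_{k-1}`, `s_{i,j} ↦ q_{j-1} q_{j-i} q_{j-1}` extends to
a surjective group homomorphism `J_n → G`. -/
theorem cactus_hom_exists {G : Type*} [Group G] (n : ℕ) (q : ℕ → G)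
    (hq0 : q 0 = 1)
    (hgen : Subgroup.closure {g : G | ∃ i, 1 ≤ i ∧ i ≤ n - 1 ∧ g = q i} = ⊤)
    (hinvq : ∀ i, 1 ≤ i → i ≤ n - 1 → q i * q i = 1)
    (hinv : ∀ i j, 1 ≤ i → i < j → j ≤ n → qq q i j * qq q i j = 1)
    (hnest : ∀ i j k l, 1 ≤ i → i ≤ k → k < l → l ≤ j → i < j → j ≤ n →
      qq q i j * qq q k l * qq q i j = qq q (i + j - l) (i + j - k))
    (hdisj : ∀ i j k l, 1 ≤ i → i < j → j < k → k < l → l ≤ n →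
      qq q i j * qq q k l = qq q k l * qq q i j) :
    ∃ φ : CactusGroup n →* G,
      Function.Surjective φ ∧
      (∀ k, 2 ≤ k → k ≤ n → φ (cactusGen n 1 k) = q (k - 1)) ∧
      (∀ i j, 1 < i → i < j → j ≤ n → φ (cactusGen n i j) = qq q i j) := by
  classical
  set f : ℕ × ℕ → G := fun p =>
    if 1 ≤ p.1 ∧ p.1 < p.2 ∧ p.2 ≤ n then qq q p.1 p.2 else 1 with hf
  have hfval : ∀ i j, 1 ≤ i → i < j → j ≤ n → f (i, j) = qq q i j := by
    intro i j h1 h2 h3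
    simp [hf, h1, h2, h3]
  have hrel : ∀ r ∈ cactusRels n, FreeGroup.lift f r = 1 := by
    intro r hr
    rcases hr with ⟨i, j, h1, h2, h3, rfl⟩ | ⟨i, j, k, l, h1, h2, h3, h4, h5, h6, h7, rfl⟩ |
      ⟨i, j, k, l, h1, h2, h3, h4, h5, h6, rfl⟩ | ⟨i, j, h, rfl⟩
    · simp only [map_pow, FreeGroup.lift_apply_of, hfval i j h1 h2 h3]
      rw [pow_two]; exact hinv i j h1 h2 h3
    · simp only [map_mul, map_inv, FreeGroup.lift_apply_of, hfval i j h1 h2 h3,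
        hfval k l h4 h5 h6]
      have comm : qq q i j * qq q k l = qq q k l * qq q i j := by
        rcases h7 with h7 | h7
        · exact hdisj i j k l h1 h2 h7 h5 h6
        · exact (hdisj k l i j h4 h5 h7 h2 h3).symm
      rw [comm]; group
    · have hk1 : 1 ≤ k := le_trans h1 h4
      have hij : i < j := lt_of_le_of_lt h4 (lt_of_lt_of_le h5 h6)
      have hjn : j ≤ n := h3
      have ha : 1 ≤ i + j - l := by omega
      have hb : i + j - l < i + j - k := by omega
      have hc : i + j - k ≤ n := by omega
      simp only [map_mul, map_inv, FreeGroup.lift_apply_of, hfval i j h1 hij hjn,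
        hfval k l hk1 h5 (le_trans h6 h3), hfval _ _ ha hb hc]
      have hainv : (qq q i j)⁻¹ = qq q i j :=
        inv_eq_of_mul_eq_one_right (hinv i j h1 hij hjn)
      have hbinv : (qq q (i + j - l) (i + j - k))⁻¹ = qq q (i + j - l) (i + j - k) :=
        inv_eq_of_mul_eq_one_right (hinv _ _ ha hb hc)
      rw [hainv, hbinv]
      have := hnest i j k l h1 h4 h5 h6 hij hjn
      rw [this]
      exact hinv _ _ ha hb hc
    · simp only [FreeGroup.lift_apply_of, hf]
      rw [if_neg]
      exact h
  refine ⟨PresentedGroup.toGroup hrel, ?_, ?_, ?_⟩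
  · intro g
    have hmem : g ∈ Subgroup.closure {g : G | ∃ i, 1 ≤ i ∧ i ≤ n - 1 ∧ g = q i} := by
      rw [hgen]; trivial
    have hsub : Subgroup.closure {g : G | ∃ i, 1 ≤ i ∧ i ≤ n - 1 ∧ g = q i} ≤
        (PresentedGroup.toGroup hrel).range := by
      apply Subgroup.closure_le _ |>.2
      rintro _ ⟨i, hi1, hi2, rfl⟩
      refine ⟨PresentedGroup.of (1, i + 1), ?_⟩
      rw [PresentedGroup.toGroup.of]
      have h1 : (1 : ℕ) < i + 1 := by omega
      have h2 : i + 1 ≤ n := by omega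
      rw [hfval 1 (i + 1) le_rfl h1 h2]
      simp only [qq, Nat.add_sub_cancel]
      rw [hinvq i hi1 hi2, one_mul]
    exact hsub hmem
  · intro k hk hkn
    show PresentedGroup.toGroup hrel (PresentedGroup.of (1, k)) = q (k - 1)
    rw [PresentedGroup.toGroup.of, hfval 1 k le_rfl (by omega) hkn]
    simp only [qq]
    have : k - 1 = k - 1 := rfl
    have hsub : k - (1 : ℕ) = k - 1 := rfl
    rw [hsub]
    have := hinvq (k - 1) (by omega) (by omega)
    rw [this, one_mul]
  · intro i j hi hij hjn
    show PresentedGroup.toGroup hrel (PresentedGroup.of (i, j)) = qq q i j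
    rw [PresentedGroup.toGroup.of, hfval i j (by omega) hij hjn]
end

section
/- Conversely, in a group G generated by involutions q_1, ..., q_{n−1} such that the elements q_{i,j} := q_{j−1} q_{j−i} q_{j−1} (with q_0 = 1) satisfy the cactus relations (q_{i,j}² = 1; q_{i,j} q_{k,l} q_{i,j} = q_{i+j−l,i+j−k} for i ≤ k < l ≤ j; q_{i,j} q_{k,l} = q_{k,l} q_{i,j} for j < k), the elements t_1 := q_1, t_2 := q_1 q_2 q_1, t_i := q_{i−1} q_i q_{i−1} q_{i−2} (i > 2) satisfy t_i² = 1, t_i t_j = t_j t_i for |i−j| > 1, and (t_i q_{j,k})² = 1 for i+1 < j < k. -/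
/-- The elements `t_1 := q_1`, `t_2 := q_1 q_2 q_1`,
`t_i := q_{i-1} q_i q_{i-1} q_{i-2}` for `i > 2`. -/
def tOfq {G : Type*} [Group G] (q : ℕ → G) (i : ℕ) : G :=
  if i = 1 then q 1
  else if i = 2 then q 1 * q 2 * q 1
  else q (i - 1) * q i * q (i - 1) * q (i - 2)

section CGPAux

variable {G : Type*} [Group G]

private lemma cgp_inv_self {X : G} (h : X * X = 1) : X⁻¹ = X :=
  inv_eq_of_mul_eq_one_right h

private lemma cgp_conj_form {X Y Z : G} (h : X * Y * X = Z) (hX : X * X = 1) :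
    X * Y * X⁻¹ = Z := by
  rw [cgp_inv_self hX]; exact h

private lemma cgp_comm_of_conj {t x : G} (h : t * x * t⁻¹ = x) : t * x = x * t := by
  conv_rhs => rw [← h]
  group

private lemma cgp_qq_self (q : ℕ → G) {x : ℕ} (h : q x * q x = 1) :
    qq q 1 (x + 1) = q x := by
  simp only [qq, Nat.add_sub_cancel]
  rw [h, one_mul]

private lemma cgp_sq_self {a b : G} (ha : a * a = 1) (hb : b * b = 1) :
    (a * b * a) * (a * b * a) = 1 := by
  have h : a * b * a * (a * b * a) = a * (b * ((a * a) * (b * a))) := by group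
  rw [h, ha, one_mul, ← mul_assoc b b a, hb, one_mul]
  exact ha

/-- Key lemma: `t_j` commutes with `q x` whenever `x + 2 ≤ j`. -/
private lemma cgp_key {n : ℕ} {q : ℕ → G}
    (hinvq : ∀ i, 1 ≤ i → i ≤ n - 1 → q i * q i = 1)
    (hinv : ∀ i j, 1 ≤ i → i < j → j ≤ n → qq q i j * qq q i j = 1)
    (hnest : ∀ i j k l, 1 ≤ i → i ≤ k → k < l → l ≤ j → i < j → j ≤ n →
      qq q i j * qq q k l * qq q i j = qq q (i + j - l) (i + j - k))
    (j x : ℕ) (hj : 3 ≤ j) (hjn : j + 1 ≤ n) (hx : 1 ≤ x) (hxj : x + 2 ≤ j) :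
    tOfq q j * q x = q x * tOfq q j := by
  have hq2 : ∀ y, 1 ≤ y → y + 1 ≤ n → q y * q y = 1 := fun y h1 h2 =>
    hinvq y h1 (by omega)
  have e1 : qq q 1 j = q (j - 1) := by
    have h := cgp_qq_self q (hq2 (j - 1) (by omega) (by omega))
    rwa [show j - 1 + 1 = j by omega] at h
  have e2 : qq q 1 (j + 1) = q j := cgp_qq_self q (hq2 j (by omega) (by omega))
  have e3 : qq q 1 (j - 1) = q (j - 2) := by
    have h := cgp_qq_self q (hq2 (j - 2) (by omega) (by omega))
    rwa [show j - 2 + 1 = j - 1 by omega] at h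
  have ex : qq q 1 (x + 1) = q x := cgp_qq_self q (hq2 x hx (by omega))
  have et : tOfq q j = qq q 1 j * qq q 1 (j + 1) * qq q 1 j * qq q 1 (j - 1) := by
    unfold tOfq
    rw [if_neg (show j ≠ 1 by omega), if_neg (show j ≠ 2 by omega), e1, e2, e3]
  have hA : qq q 1 j * qq q 1 j = 1 := hinv 1 j le_rfl (by omega) (by omega)
  have hB : qq q 1 (j + 1) * qq q 1 (j + 1) = 1 := hinv 1 (j + 1) le_rfl (by omega) (by omega)
  have hM : qq q 1 (j - 1) * qq q 1 (j - 1) = 1 := hinv 1 (j - 1) le_rfl (by omega) (by omega)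
  have c0 : qq q 1 (j - 1) * qq q 1 (x + 1) * (qq q 1 (j - 1))⁻¹ = qq q (j - 1 - x) (j - 1) := by
    have h := hnest 1 (j - 1) 1 (x + 1) le_rfl le_rfl (by omega) (by omega) (by omega) (by omega)
    rw [show 1 + (j - 1) - (x + 1) = j - 1 - x by omega,
      show 1 + (j - 1) - 1 = j - 1 by omega] at h
    exact cgp_conj_form h hM
  have c1 : qq q 1 j * qq q (j - 1 - x) (j - 1) * (qq q 1 j)⁻¹ = qq q 2 (x + 2) := by
    have h := hnest 1 j (j - 1 - x) (j - 1) le_rfl (by omega) (by omega) (by omega)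
      (by omega) (by omega)
    rw [show 1 + j - (j - 1) = 2 by omega, show 1 + j - (j - 1 - x) = x + 2 by omega] at h
    exact cgp_conj_form h hA
  have c2 : qq q 1 (j + 1) * qq q 2 (x + 2) * (qq q 1 (j + 1))⁻¹ = qq q (j - x) j := by
    have h := hnest 1 (j + 1) 2 (x + 2) le_rfl (by omega) (by omega) (by omega)
      (by omega) (by omega)
    rw [show 1 + (j + 1) - (x + 2) = j - x by omega, show 1 + (j + 1) - 2 = j by omega] at h
    exact cgp_conj_form h hB
  have c3 : qq q 1 j * qq q (j - x) j * (qq q 1 j)⁻¹ = qq q 1 (x + 1) := by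
    have h := hnest 1 j (j - x) j le_rfl (by omega) (by omega) le_rfl (by omega) (by omega)
    rw [show 1 + j - j = 1 by omega, show 1 + j - (j - x) = x + 1 by omega] at h
    exact cgp_conj_form h hA
  have hconj : tOfq q j * qq q 1 (x + 1) * (tOfq q j)⁻¹ = qq q 1 (x + 1) := by
    rw [et]
    calc qq q 1 j * qq q 1 (j + 1) * qq q 1 j * qq q 1 (j - 1) * qq q 1 (x + 1) *
          (qq q 1 j * qq q 1 (j + 1) * qq q 1 j * qq q 1 (j - 1))⁻¹
        = qq q 1 j * (qq q 1 (j + 1) * (qq q 1 j *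
            (qq q 1 (j - 1) * qq q 1 (x + 1) * (qq q 1 (j - 1))⁻¹) * (qq q 1 j)⁻¹) *
            (qq q 1 (j + 1))⁻¹) * (qq q 1 j)⁻¹ := by group
      _ = qq q 1 (x + 1) := by rw [c0, c1, c2, c3]
  rw [← ex]
  exact cgp_comm_of_conj hconj

end CGPAux

/-- Chmutov--Glick--Pylyavskyy, the other direction: in a group generated by
involutions `q_1, …, q_{n-1}` whose associated elements
`q_{i,j} = q_{j-1} q_{j-i} q_{j-1}` (with `q_0 = 1`) satisfy the cactus
relations, the elements `t_1 = q_1`, `t_2 = q_1 q_2 q_1`,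
`t_i = q_{i-1} q_i q_{i-1} q_{i-2}` (`i > 2`) satisfy the Bender--Knuth-type
relations. -/
theorem cactus_relations_imply_bk_relations {G : Type*} [Group G] (n : ℕ) (q : ℕ → G)
    (hq0 : q 0 = 1)
    (hgen : Subgroup.closure {g : G | ∃ i, 1 ≤ i ∧ i ≤ n - 1 ∧ g = q i} = ⊤)
    (hinvq : ∀ i, 1 ≤ i → i ≤ n - 1 → q i * q i = 1)
    (hinv : ∀ i j, 1 ≤ i → i < j → j ≤ n → qq q i j * qq q i j = 1)
    (hnest : ∀ i j k l, 1 ≤ i → i ≤ k → k < l → l ≤ j → i < j → j ≤ n →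
      qq q i j * qq q k l * qq q i j = qq q (i + j - l) (i + j - k))
    (hdisj : ∀ i j k l, 1 ≤ i → i < j → j < k → k < l → l ≤ n →
      qq q i j * qq q k l = qq q k l * qq q i j) :
    (∀ i, 1 ≤ i → i ≤ n - 1 → tOfq q i * tOfq q i = 1) ∧
    (∀ i j, 1 ≤ i → i ≤ n - 1 → 1 ≤ j → j ≤ n - 1 → (i + 1 < j ∨ j + 1 < i) →
      tOfq q i * tOfq q j = tOfq q j * tOfq q i) ∧
    (∀ i j k, 1 ≤ i → i + 1 < j → j < k → k ≤ n →
      (tOfq q i * qq q j k) * (tOfq q i * qq q j k) = 1) := by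
  have part1 : ∀ i, 1 ≤ i → i ≤ n - 1 → tOfq q i * tOfq q i = 1 := by
    intro i h1 h2
    rcases eq_or_ne i 1 with rfl | hi1
    · have e : tOfq q 1 = q 1 := by simp [tOfq]
      rw [e]
      exact hinvq 1 h1 h2
    rcases eq_or_ne i 2 with rfl | hi2
    · have e : tOfq q 2 = q 1 * q 2 * q 1 := by simp [tOfq]
      rw [e]
      exact cgp_sq_self (hinvq 1 (by omega) (by omega)) (hinvq 2 (by omega) h2)
    · have hi3 : 3 ≤ i := by omega
      have hc := cgp_key hinvq hinv hnest i (i - 2) hi3 (by omega) (by omega) (by omega)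
      have et : tOfq q i = q (i - 1) * q i * q (i - 1) * q (i - 2) := by
        unfold tOfq
        rw [if_neg hi1, if_neg hi2]
      have hu : (q (i - 1) * q i * q (i - 1)) * (q (i - 1) * q i * q (i - 1)) = 1 :=
        cgp_sq_self (hinvq (i - 1) (by omega) (by omega)) (hinvq i h1 h2)
      have h2' : q (i - 2) * q (i - 2) = 1 := hinvq (i - 2) (by omega) (by omega)
      calc tOfq q i * tOfq q i
          = (q (i - 1) * q i * q (i - 1)) * (q (i - 2) * tOfq q i) := by rw [et]; group
        _ = (q (i - 1) * q i * q (i - 1)) * (tOfq q i * q (i - 2)) := by rw [← hc]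
        _ = ((q (i - 1) * q i * q (i - 1)) * (q (i - 1) * q i * q (i - 1))) *
              (q (i - 2) * q (i - 2)) := by rw [et]; group
        _ = 1 := by rw [hu, h2', one_mul]
  have key : ∀ j x, 3 ≤ j → j + 1 ≤ n → 1 ≤ x → x + 2 ≤ j → Commute (tOfq q j) (q x) := by
    intro j x h1 h2 h3 h4
    have h := cgp_key hinvq hinv hnest j x h1 h2 h3 h4
    exact h
  have hcomm : ∀ i j, 1 ≤ i → j ≤ n - 1 → i + 1 < j →
      Commute (tOfq q j) (tOfq q i) := by
    intro i j h1 hjn hij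
    have hj3 : 3 ≤ j := by omega
    have hjn' : j + 1 ≤ n := by omega
    rcases eq_or_ne i 1 with rfl | hi1
    · rw [show tOfq q 1 = q 1 from by simp [tOfq]]
      exact key j 1 hj3 hjn' le_rfl (by omega)
    rcases eq_or_ne i 2 with rfl | hi2
    · rw [show tOfq q 2 = q 1 * q 2 * q 1 from by simp [tOfq]]
      exact ((key j 1 hj3 hjn' le_rfl (by omega)).mul_right
        (key j 2 hj3 hjn' (by omega) (by omega))).mul_right
        (key j 1 hj3 hjn' le_rfl (by omega))
    · rw [show tOfq q i = q (i - 1) * q i * q (i - 1) * q (i - 2) from by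
        unfold tOfq; rw [if_neg hi1, if_neg hi2]]
      exact (((key j (i - 1) hj3 hjn' (by omega) (by omega)).mul_right
        (key j i hj3 hjn' (by omega) (by omega))).mul_right
        (key j (i - 1) hj3 hjn' (by omega) (by omega))).mul_right
        (key j (i - 2) hj3 hjn' (by omega) (by omega))
  refine ⟨part1, ?_, ?_⟩
  · intro i j h1i hin h1j hjn hor
    rcases hor with h | h
    · exact ((hcomm i j h1i hjn h).symm).eq
    · exact (hcomm j i h1j hin h).eq
  · intro i j k h1i hij hjk hkn
    have hfac : ∀ x, 1 ≤ x → x + 1 < j → Commute (q x) (qq q j k) := by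
      intro x hx1 hxj
      have hx : q x * q x = 1 := hinvq x hx1 (by omega)
      have h := hdisj 1 (x + 1) j k le_rfl (by omega) hxj hjk hkn
      rw [cgp_qq_self q hx] at h
      exact h
    have hti : Commute (tOfq q i) (qq q j k) := by
      rcases eq_or_ne i 1 with rfl | hi1
      · rw [show tOfq q 1 = q 1 from by simp [tOfq]]
        exact hfac 1 le_rfl (by omega)
      rcases eq_or_ne i 2 with rfl | hi2
      · rw [show tOfq q 2 = q 1 * q 2 * q 1 from by simp [tOfq]]
        exact ((hfac 1 le_rfl (by omega)).mul_left
          (hfac 2 (by omega) (by omega))).mul_left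
          (hfac 1 le_rfl (by omega))
      · rw [show tOfq q i = q (i - 1) * q i * q (i - 1) * q (i - 2) from by
          unfold tOfq; rw [if_neg hi1, if_neg hi2]]
        exact (((hfac (i - 1) (by omega) (by omega)).mul_left
          (hfac i (by omega) (by omega))).mul_left
          (hfac (i - 1) (by omega) (by omega))).mul_left
          (hfac (i - 2) (by omega) (by omega))
    have ht2 : tOfq q i * tOfq q i = 1 := part1 i h1i (by omega)
    have hQ2 : qq q j k * qq q j k = 1 := hinv j k (by omega) hjk hkn
    calc tOfq q i * qq q j k * (tOfq q i * qq q j k)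
        = tOfq q i * (qq q j k * tOfq q i) * qq q j k := by group
      _ = tOfq q i * (tOfq q i * qq q j k) * qq q j k := by rw [← hti.eq]
      _ = (tOfq q i * tOfq q i) * (qq q j k * qq q j k) := by group
      _ = 1 := by rw [ht2, hQ2, one_mul]
end
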